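/- Let (V, ω) be a finite-dimensional real symplectic vector space and Q : V → V linear with Q² = 0 and ω(Qu, v) + ω(u, Qv) = 0 for all u, v. Then ω descends to a well-defined nondegenerate bilinear form on the homology ker Q / im Q. -/

import Mathlib

/-- With `(V, ω)` symplectic and `Q` skew-adjoint with `Q² = 0`,
`ω` descends to a well-defined nondegenerate bilinear form on `ker Q / im Q`. -/
theorem omega_descends_nondeg_on_homology
    (V : Type*) [AddCommGroup V] [Module ℝ V] [FiniteDimensional ℝ V]
    (ω : LinearMap.BilinForm ℝ V) (halt : ∀ v : V, ω v v = 0)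
    (hnd : ∀ x : V, (∀ y : V, ω x y = 0) → x = 0)
    (Q : V →ₗ[ℝ] V) (hQ2 : ∀ v, Q (Q v) = 0)
    (hskew : ∀ u v : V, ω (Q u) v + ω u (Q v) = 0) :
    -- the homology is `ker Q / im Q`, where `im Q` is viewed inside `ker Q`
    ∃ ω' : LinearMap.BilinForm ℝ
        (↥(LinearMap.ker Q) ⧸
          (LinearMap.range Q).comap (LinearMap.ker Q).subtype),
      (∀ u v : LinearMap.ker Q,
        ω' (Submodule.Quotient.mk u) (Submodule.Quotient.mk v) = ω u.1 v.1) ∧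
      (∀ a, (∀ b, ω' a b = 0) → a = 0) := by
  set K := LinearMap.ker Q with hK
  set J := (LinearMap.range Q).comap K.subtype with hJ
  -- restricted bilinear form on K
  set B : ↥K →ₗ[ℝ] ↥K →ₗ[ℝ] ℝ := ω.compl₁₂ K.subtype K.subtype with hB
  have hBapp : ∀ u v : ↥K, B u v = ω u.1 v.1 := fun u v => rfl
  -- ω (u, Q w) = 0 for u ∈ ker Q
  have hright : ∀ (u : ↥K) (x : ↥K), x ∈ J → B u x = 0 := by
    rintro u ⟨x, hx⟩ hxJ
    obtain ⟨w, rfl⟩ : ∃ w, Q w = x := hxJ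
    have := hskew u.1 w
    have hu0 : Q u.1 = 0 := u.2
    rw [hu0] at this
    simp only [map_zero, LinearMap.zero_apply, zero_add] at this
    simpa [hBapp] using this
  have hleft : ∀ (x : ↥K), x ∈ J → ∀ (v : ↥K), B x v = 0 := by
    rintro ⟨x, hx⟩ hxJ v
    obtain ⟨w, rfl⟩ : ∃ w, Q w = x := hxJ
    have := hskew w v.1
    have hv0 : Q v.1 = 0 := v.2
    rw [hv0] at this
    simp only [map_zero, add_zero] at this
    simpa [hBapp] using this
  -- lift in the second argument
  have hker2 : ∀ u : ↥K, J ≤ LinearMap.ker (B u) := by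
    intro u x hx
    exact hright u x hx
  set L : ↥K →ₗ[ℝ] (↥K ⧸ J) →ₗ[ℝ] ℝ :=
    { toFun := fun u => J.liftQ (B u) (hker2 u)
      map_add' := by
        intro u v
        apply LinearMap.ext
        intro b
        induction b using Submodule.Quotient.induction_on with
        | H b => simp [Submodule.liftQ_apply]
      map_smul' := by
        intro c u
        apply LinearMap.ext
        intro b
        induction b using Submodule.Quotient.induction_on with
        | H b => simp [Submodule.liftQ_apply] } with hL
  have hkerL : J ≤ LinearMap.ker L := by
    intro x hx
    apply LinearMap.ext
    intro b
    induction b using Submodule.Quotient.induction_on with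
    | H b =>
      simp only [hL, LinearMap.coe_mk, AddHom.coe_mk, LinearMap.zero_apply,
        LinearMap.mem_ker]
      rw [Submodule.liftQ_apply]
      exact hleft x hx b
  refine ⟨J.liftQ L hkerL, ?_, ?_⟩
  · intro u v
    rw [Submodule.liftQ_apply]
    simp only [hL, LinearMap.coe_mk, AddHom.coe_mk]
    rw [Submodule.liftQ_apply]
    exact hBapp u v
  · intro a ha
    obtain ⟨u, rfl⟩ := Submodule.Quotient.mk_surjective J a
    have hu : ∀ v : ↥K, ω u.1 v.1 = 0 := by
      intro v
      have := ha (Submodule.Quotient.mk v)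
      rw [Submodule.liftQ_apply] at this
      simpa only [hL, LinearMap.coe_mk, AddHom.coe_mk, Submodule.liftQ_apply, hBapp] using this
    -- show u.1 ∈ range Q
    rw [Submodule.Quotient.mk_eq_zero]
    show u.1 ∈ LinearMap.range Q
    set x : V := u.1 with hx
    -- the functional ω x vanishes on ker Q
    have hker : K ≤ LinearMap.ker (ω x) := by
      intro v hv
      exact hu ⟨v, hv⟩
    -- factor it through Q
    set φ' : (V ⧸ K) →ₗ[ℝ] ℝ := K.liftQ (ω x) hker with hφ'
    set e : (V ⧸ K) ≃ₗ[ℝ] ↥(LinearMap.range Q) := Q.quotKerEquivRange with he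
    obtain ⟨ψ, hψ⟩ := LinearMap.exists_extend (φ'.comp (e.symm : ↥(LinearMap.range Q) →ₗ[ℝ] V ⧸ K))
    have hfact : ∀ v : V, ψ (Q v) = ω x v := by
      intro v
      have h1 : ψ (Q v) = φ' (e.symm ⟨Q v, ⟨v, rfl⟩⟩) := by
        have := LinearMap.congr_fun hψ ⟨Q v, ⟨v, rfl⟩⟩
        simpa using this
      have h2 : e (Submodule.Quotient.mk v) = ⟨Q v, ⟨v, rfl⟩⟩ := by
        simp [he, LinearMap.quotKerEquivRange]
        rfl
      have h3 : e.symm ⟨Q v, ⟨v, rfl⟩⟩ = Submodule.Quotient.mk v := by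
        rw [← h2, LinearEquiv.symm_apply_apply]
      rw [h1, h3, hφ', Submodule.liftQ_apply]
    -- represent ψ via ω
    have hndB : ω.Nondegenerate :=
      (LinearMap.IsAlt.isRefl (B := ω) halt).nondegenerate_iff_separatingLeft.mpr hnd
    set z : V := (ω.toDual hndB).symm ψ with hz
    have hzapp : ∀ w : V, ω z w = ψ w := fun w =>
      LinearMap.BilinForm.apply_toDual_symm_apply (hB := hndB) ψ w
    have hfinal : ∀ v : V, ω (x + Q z) v = 0 := by
      intro v
      have h4 : ω x v = ψ (Q v) := (hfact v).symm
      have h5 : ψ (Q v) = ω z (Q v) := (hzapp (Q v)).symm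
      have h6 := hskew z v
      simp only [map_add, LinearMap.add_apply]
      rw [h4, h5]
      linarith
    have := hnd _ hfinal
    have hxQ : x = Q (-z) := by
      rw [map_neg]
      exact eq_neg_of_add_eq_zero_left this
    exact ⟨-z, hxQ.symm⟩
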